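/- For all t with -1 < t < 1, ∫_{-∞}^{∞} z² e^{tz} e^{-z}/(1 + e^{-z})^2 dz = (1/2)π² csc(πt)³ (πt(3 + cos(2πt)) - 2 sin(2πt)), understood via analytic continuation at t = 0. -/

import Mathlib

open Real MeasureTheory Set Filter

noncomputable def lgW (z : ℝ) : ℝ := Real.exp (-z) / (1 + Real.exp (-z)) ^ 2

lemma lgW_nonneg (z : ℝ) : 0 ≤ lgW z := by
  unfold lgW; positivity

lemma lgW_even (z : ℝ) : lgW (-z) = lgW z := by
  unfold lgW
  have h1 := Real.exp_ne_zero z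
  have h2 := Real.exp_ne_zero (-z)
  have h3 : (1 + Real.exp (-z)) ≠ 0 := by positivity
  have h4 : (1 + Real.exp (- -z)) ≠ 0 := by positivity
  have hmul : Real.exp (-z) * Real.exp z = 1 := by
    rw [← Real.exp_add]; simp
  field_simp
  linear_combination (Real.exp (-z) - Real.exp z) * hmul

lemma lgW_le (z : ℝ) : lgW z ≤ Real.exp (-|z|) := by
  rcases le_or_gt 0 z with h | h
  · rw [abs_of_nonneg h]
    unfold lgW
    have h3 : (0:ℝ) < (1 + Real.exp (-z)) ^ 2 := by positivity
    rw [div_le_iff₀ h3]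
    nth_rewrite 1 [show Real.exp (-z) = Real.exp (-z) * 1 by ring]
    apply mul_le_mul_of_nonneg_left _ (Real.exp_nonneg _)
    nlinarith [Real.exp_pos (-z)]
  · rw [abs_of_neg h, ← lgW_even]
    unfold lgW
    have h3 : (0:ℝ) < (1 + Real.exp (- -z)) ^ 2 := by positivity
    rw [div_le_iff₀ h3]
    nth_rewrite 1 [show Real.exp (- -z) = Real.exp (- -z) * 1 by ring]
    apply mul_le_mul_of_nonneg_left _ (Real.exp_nonneg _)
    nlinarith [Real.exp_pos (- -z)]

lemma lgW_continuous : Continuous lgW := by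
  unfold lgW
  apply Continuous.div (by continuity) (by continuity)
  intro z; positivity

lemma lg_integrable_aux {a : ℝ} (ha : 0 < a) (k : ℕ) :
    Integrable (fun z : ℝ => |z| ^ k * Real.exp (-(a * |z|))) := by
  have hIoi : IntegrableOn (fun z : ℝ => |z| ^ k * Real.exp (-(a * |z|))) (Ioi 0) := by
    have h0 : IntegrableOn (fun x : ℝ => x ^ (k : ℝ) * Real.exp (-a * x ^ (1:ℝ))) (Ioi 0) :=
      integrableOn_rpow_mul_exp_neg_mul_rpow
        (by exact_mod_cast neg_one_lt_zero.trans_le (Nat.cast_nonneg k)) zero_lt_one ha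
    refine h0.congr_fun (fun x hx => ?_) measurableSet_Ioi
    rw [mem_Ioi] at hx
    beta_reduce
    rw [Real.rpow_natCast, Real.rpow_one, abs_of_pos hx, neg_mul]
  have hIic : IntegrableOn (fun z : ℝ => |z| ^ k * Real.exp (-(a * |z|))) (Iic 0) := by
    rw [← Measure.map_neg_eq_self (volume : Measure ℝ)]
    have m : MeasurableEmbedding fun x : ℝ => -x := (Homeomorph.neg ℝ).measurableEmbedding
    rw [m.integrableOn_map_iff]
    simp_rw [Function.comp_def, abs_neg, neg_preimage, neg_Iic, neg_zero]
    exact Iff.mpr integrableOn_Ici_iff_integrableOn_Ioi hIoi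
  have h := hIic.union hIoi
  rwa [Iic_union_Ioi, integrableOn_univ] at h

lemma lg_integrand_bound {s : ℝ} (hs : |s| < 1) (k : ℕ) (z : ℝ) :
    ‖z ^ k * Real.exp (s * z) * lgW z‖ ≤ |z| ^ k * Real.exp (-((1 - |s|) * |z|)) := by
  rw [norm_mul, norm_mul, Real.norm_eq_abs, Real.norm_eq_abs, Real.norm_eq_abs, abs_pow,
    abs_of_pos (Real.exp_pos _), abs_of_nonneg (lgW_nonneg z)]
  have h4 : Real.exp (s * z) * lgW z ≤ Real.exp (-((1 - |s|) * |z|)) := by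
    calc Real.exp (s * z) * lgW z ≤ Real.exp (|s| * |z|) * Real.exp (-|z|) := by
          apply mul_le_mul _ (lgW_le z) (lgW_nonneg z) (Real.exp_nonneg _)
          exact Real.exp_le_exp.mpr ((le_abs_self _).trans (le_of_eq (abs_mul s z)))
      _ = Real.exp (-((1 - |s|) * |z|)) := by rw [← Real.exp_add]; ring_nf
  rw [mul_assoc]
  exact mul_le_mul_of_nonneg_left h4 (by positivity)

lemma lg_integrable {s : ℝ} (hs : |s| < 1) (k : ℕ) :
    Integrable (fun z : ℝ => z ^ k * Real.exp (s * z) * lgW z) := by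
  apply Integrable.mono' (lg_integrable_aux (a := 1 - |s|) (by linarith) k)
  · exact (((continuous_pow k).mul
      (Real.continuous_exp.comp (continuous_const.mul continuous_id))).mul
      lgW_continuous).aestronglyMeasurable
  · exact Filter.Eventually.of_forall fun z => lg_integrand_bound hs k z

lemma lg_meas (s : ℝ) (k : ℕ) :
    AEStronglyMeasurable (fun z : ℝ => z ^ k * Real.exp (s * z) * lgW z) volume :=
  (((continuous_pow k).mul
      (Real.continuous_exp.comp (continuous_const.mul continuous_id))).mul
      lgW_continuous).aestronglyMeasurable

lemma lg_hasDerivAt' {t : ℝ} (ht : |t| < 1) (k : ℕ) :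
    HasDerivAt (fun s => ∫ z : ℝ, z ^ k * Real.exp (s * z) * lgW z)
      (∫ z : ℝ, z ^ (k + 1) * Real.exp (t * z) * lgW z) t := by
  set ε := (1 - |t|) / 2 with hε
  have hε0 : 0 < ε := by rw [hε]; linarith
  have key := hasDerivAt_integral_of_dominated_loc_of_deriv_le (μ := volume) (𝕜 := ℝ)
    (F := fun s z => z ^ k * Real.exp (s * z) * lgW z)
    (F' := fun s z => z ^ (k + 1) * Real.exp (s * z) * lgW z)
    (x₀ := t) (bound := fun z => |z| ^ (k + 1) * Real.exp (-(ε * |z|))) (Metric.ball_mem_nhds t hε0)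
    (Filter.Eventually.of_forall fun s => lg_meas s k)
    (lg_integrable ht k)
    (lg_meas t (k + 1))
    (Filter.Eventually.of_forall fun z => ?_)
    (lg_integrable_aux hε0 (k + 1))
    (Filter.Eventually.of_forall fun z => ?_)
  · exact key.2
  · -- bound
    intro s hs
    rw [Metric.mem_ball, Real.dist_eq] at hs
    have habs : |s| < 1 - ε := by
      have := abs_sub_abs_le_abs_sub s t
      rw [hε] at hs ⊢
      linarith
    refine (lg_integrand_bound (by linarith) (k + 1) z).trans ?_
    have : Real.exp (-((1 - |s|) * |z|)) ≤ Real.exp (-(ε * |z|)) := by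
      apply Real.exp_le_exp.mpr
      have := abs_nonneg z
      nlinarith
    exact mul_le_mul_of_nonneg_left this (by positivity)
  · -- differentiability
    intro s hs
    have h := (((hasDerivAt_id s).mul_const z).exp.const_mul (z ^ k)).mul_const (lgW z)
    refine h.congr_deriv ?_
    simp only [id]
    ring

lemma lg_integral_ofReal {μ : Measure ℝ} (f : ℝ → ℝ) :
    ∫ x, ((f x : ℝ) : ℂ) ∂μ = ((∫ x, f x ∂μ : ℝ) : ℂ) :=
  integral_ofReal

noncomputable def lgS (z : ℝ) : ℝ := (1 + Real.exp (-z))⁻¹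

lemma lgS_hasDerivAt (z : ℝ) : HasDerivAt lgS (lgW z) z := by
  have h1 : HasDerivAt (fun z : ℝ => 1 + Real.exp (-z)) (-Real.exp (-z)) z := by
    have := ((hasDerivAt_id z).neg.exp).const_add 1
    simpa using this
  have h2 : (1 + Real.exp (-z)) ≠ 0 := by positivity
  have := h1.inv h2
  refine this.congr_deriv ?_
  unfold lgW
  field_simp

lemma lgS_mem (z : ℝ) : lgS z ∈ Ioo (0:ℝ) 1 := by
  unfold lgS
  constructor
  · positivity
  · rw [inv_lt_one_iff₀]
    right
    nlinarith [Real.exp_pos (-z)]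

lemma lgS_image : lgS '' univ = Ioo (0:ℝ) 1 := by
  apply Subset.antisymm
  · rintro x ⟨z, -, rfl⟩; exact lgS_mem z
  · rintro x ⟨hx0, hx1⟩
    refine ⟨-Real.log (x⁻¹ - 1), mem_univ _, ?_⟩
    unfold lgS
    rw [neg_neg, Real.exp_log (by rw [sub_pos]; exact (one_lt_inv_iff₀).mpr ⟨hx0, hx1⟩)]
    field_simp
    ring

lemma lgS_inj : InjOn lgS univ := by
  intro a _ b _ hab
  unfold lgS at hab
  have h2 : (1 + Real.exp (-a)) ≠ 0 := by positivity
  have h3 : (1 + Real.exp (-b)) ≠ 0 := by positivity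
  have := inv_injective hab
  have : Real.exp (-a) = Real.exp (-b) := by linarith
  have := Real.exp_injective this
  linarith

lemma lgS_rpow (t z : ℝ) : lgS z ^ t * (1 - lgS z) ^ (-t) = Real.exp (t * z) := by
  have he : (0:ℝ) < 1 + Real.exp (-z) := by positivity
  have h1 : 1 - lgS z = Real.exp (-z) / (1 + Real.exp (-z)) := by
    unfold lgS; field_simp; ring
  have h0 : (0:ℝ) < lgS z := (lgS_mem z).1
  have h1' : (0:ℝ) < 1 - lgS z := by rw [h1]; positivity
  have hdiv : lgS z / (1 - lgS z) = Real.exp z := by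
    rw [h1]
    unfold lgS
    rw [Real.exp_neg]
    have h4 := Real.exp_ne_zero z
    field_simp
  rw [Real.rpow_neg h1'.le, ← div_eq_mul_inv, ← Real.div_rpow h0.le h1'.le,
    hdiv, ← Real.exp_mul, mul_comm]

lemma lg_change_of_var (t : ℝ) :
    (∫ x in Ioo (0:ℝ) 1, x ^ t * (1 - x) ^ (-t)) = ∫ z : ℝ, Real.exp (t * z) * lgW z := by
  have h := integral_image_eq_integral_abs_deriv_smul MeasurableSet.univ
    (fun z _ => (lgS_hasDerivAt z).hasDerivWithinAt)
    lgS_inj (fun x => x ^ t * (1 - x) ^ (-t))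
  rw [lgS_image] at h
  rw [h, Measure.restrict_univ]
  congr 1
  funext z
  rw [abs_of_nonneg (lgW_nonneg z), smul_eq_mul, ← lgS_rpow t z]
  ring

lemma lg_beta {t : ℝ} (h1 : -1 < t) (h2 : t < 1) :
    (∫ x in Ioo (0:ℝ) 1, x ^ t * (1 - x) ^ (-t))
      = Real.Gamma (1 + t) * Real.Gamma (1 - t) := by
  have hu : 0 < (1 + (t:ℂ)).re := by simp; linarith
  have hv : 0 < (1 - (t:ℂ)).re := by simp; linarith
  have hB := Complex.Gamma_mul_Gamma_eq_betaIntegral hu hv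
  rw [show (1 + (t:ℂ)) + (1 - t) = 1 + 1 by ring, Complex.Gamma_add_one 1 one_ne_zero,
    Complex.Gamma_one, mul_one, one_mul] at hB
  have hBeta : Complex.betaIntegral (1 + t) (1 - t)
      = ((∫ x in Ioo (0:ℝ) 1, x ^ t * (1 - x) ^ (-t) : ℝ) : ℂ) := by
    rw [Complex.betaIntegral, intervalIntegral.integral_of_le zero_le_one,
      integral_Ioc_eq_integral_Ioo]
    calc ∫ x in Ioo (0:ℝ) 1, (x:ℂ) ^ ((1:ℂ) + t - 1) * ((1:ℂ) - x) ^ ((1:ℂ) - t - 1)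
        = ∫ x in Ioo (0:ℝ) 1, ((x ^ t * (1 - x) ^ (-t) : ℝ) : ℂ) := ?_
      _ = ((∫ x in Ioo (0:ℝ) 1, x ^ t * (1 - x) ^ (-t) : ℝ) : ℂ) :=
          lg_integral_ofReal _
    apply setIntegral_congr_fun measurableSet_Ioo
    intro x hx
    obtain ⟨hx0, hx1⟩ := hx
    beta_reduce
    rw [Complex.ofReal_mul]
    have e1 : (x:ℂ) ^ ((1:ℂ) + t - 1) = ((x ^ t : ℝ) : ℂ) := by
      rw [show (1:ℂ) + t - 1 = ((t:ℝ):ℂ) by push_cast; ring, ← Complex.ofReal_cpow hx0.le]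
    have e2 : ((1:ℂ) - x) ^ ((1:ℂ) - t - 1) = (((1 - x) ^ (-t) : ℝ) : ℂ) := by
      rw [show (1:ℂ) - t - 1 = ((-t : ℝ):ℂ) by push_cast; ring,
        show ((1:ℂ) - x) = ((1 - x : ℝ) : ℂ) by push_cast; ring,
        ← Complex.ofReal_cpow (by linarith)]
    rw [e1, e2, ← Complex.ofReal_mul]
  apply Complex.ofReal_injective
  rw [← hBeta, ← hB, Complex.ofReal_mul, ← Complex.Gamma_ofReal, ← Complex.Gamma_ofReal]
  push_cast
  ring_nf

lemma lgF_zero_eq' {t : ℝ} (h1 : -1 < t) (h2 : t < 1) (ht : t ≠ 0) :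
    (∫ z : ℝ, Real.exp (t * z) * lgW z) = π * t / Real.sin (π * t) := by
  rw [← lg_change_of_var, lg_beta h1 h2, add_comm, Real.Gamma_add_one ht, mul_assoc,
    Real.Gamma_mul_Gamma_one_sub]
  ring

lemma lg_eta2 : HasSum (fun n : ℕ => (-1:ℝ)^n / ((n:ℝ)+1)^2) (π^2/12) := by
  have hz : HasSum (fun n : ℕ => 1 / (n:ℝ)^2) (π^2/6) := hasSum_zeta_two
  have hinj : Function.Injective (fun m : ℕ => 2 * m) :=
    fun a b h => Nat.eq_of_mul_eq_mul_left (by norm_num) h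
  have hd2 : HasSum (fun n : ℕ => 1 / (n:ℝ)^2 - (-1:ℝ)^(n+1) / (n:ℝ)^2) (π^2/12) := by
    have hsupp : ∀ n : ℕ, n ∉ Set.range (fun m : ℕ => 2 * m) →
        (1 / (n:ℝ)^2 - (-1:ℝ)^(n+1) / (n:ℝ)^2) = 0 := by
      intro n hn
      rcases Nat.even_or_odd n with he | ho
      · obtain ⟨k, hk⟩ := he
        exact absurd ⟨k, by show 2 * k = n; omega⟩ hn
      · rw [(ho.add_one).neg_one_pow]; ring
    rw [← Function.Injective.hasSum_iff hinj hsupp]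
    have key := hz.mul_left (1/2)
    rw [show (1/2:ℝ) * (π^2/6) = π^2/12 by ring] at key
    convert key using 1
    rfl
    funext m
    simp only [Function.comp_apply]
    have hpow : (-1:ℝ)^(2*m+1) = -1 := by
      rw [pow_succ, pow_mul, neg_one_sq, one_pow, one_mul]
    rcases Nat.eq_zero_or_pos m with rfl | hm
    · norm_num
    · have hm' : ((m:ℝ)) ≠ 0 := Nat.cast_ne_zero.mpr hm.ne'
      rw [hpow]
      push_cast
      field_simp
      ring
  have hh : HasSum (fun n : ℕ => (-1:ℝ)^(n+1) / (n:ℝ)^2) (π^2/12) := by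
    have h3 := hz.sub hd2
    rw [show π^2/6 - π^2/12 = π^2/12 by ring] at h3
    convert h3 using 1
    rfl
    funext n
    ring
  have hshift := (hasSum_nat_add_iff (f := fun n : ℕ => (-1:ℝ)^(n+1) / (n:ℝ)^2) 1).mpr
    (by norm_num; exact hh)
  have hfun : (fun n : ℕ => (-1:ℝ)^n / ((n:ℝ)+1)^2)
      = fun n : ℕ => (-1:ℝ)^((n+1)+1) / (((n+1:ℕ)):ℝ)^2 := by
    funext n; push_cast; rw [pow_succ, pow_succ]; ring
  rw [hfun]
  exact hshift

lemma lgW_abs (z : ℝ) : lgW |z| = lgW z := by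
  rcases abs_cases z with ⟨h, _⟩ | ⟨h, _⟩
  · rw [h]
  · rw [h, lgW_even]

lemma lg_term_integrableOn {c : ℝ} (hc : 0 < c) :
    IntegrableOn (fun z : ℝ => z^2 * Real.exp (-(c * z))) (Ioi 0) := by
  refine ((lg_integrable_aux hc 2).integrableOn).congr_fun (fun x hx => ?_) measurableSet_Ioi
  rw [mem_Ioi] at hx
  beta_reduce
  rw [abs_of_pos hx]

lemma lg_term_integral {c : ℝ} (hc : 0 < c) :
    ∫ z in Ioi (0:ℝ), z^2 * Real.exp (-(c * z)) = 2 / c^3 := by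
  have hG : Real.Gamma 3 = 2 := by
    rw [show (3:ℝ) = ((2:ℕ):ℝ)+1 by norm_num, Real.Gamma_nat_eq_factorial]; norm_num
  calc ∫ z in Ioi (0:ℝ), z^2 * Real.exp (-(c*z))
      = ∫ z in Ioi (0:ℝ), z ^ ((3:ℝ)-1) * Real.exp (-(c*z)) := by
        apply setIntegral_congr_fun measurableSet_Ioi
        intro x hx
        beta_reduce
        rw [show ((3:ℝ)-1) = ((2:ℕ):ℝ) by norm_num, Real.rpow_natCast]
    _ = (1/c) ^ (3:ℝ) * Real.Gamma 3 := Real.integral_rpow_mul_exp_neg_mul_Ioi (by norm_num) hc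
    _ = 2 / c^3 := by
        rw [hG, show (3:ℝ) = ((3:ℕ):ℝ) by norm_num, Real.rpow_natCast]
        field_simp

lemma lg_hasSum {z : ℝ} (hz : 0 < z) :
    HasSum (fun n : ℕ => ((-1:ℝ)^n * ((n:ℝ)+1)) * (z^2 * Real.exp (-(((n:ℝ)+1) * z))))
      (z^2 * lgW z) := by
  set x := Real.exp (-z) with hx
  have hx0 : 0 < x := Real.exp_pos _
  have hx1 : x < 1 := by rw [hx, Real.exp_lt_one_iff]; linarith
  have hnorm : ‖-x‖ < 1 := by rw [norm_neg, Real.norm_eq_abs, abs_of_pos hx0]; exact hx1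
  have h1 : HasSum (fun n : ℕ => (n:ℝ) * (-x)^n) (-x / (1 - -x)^2) :=
    hasSum_coe_mul_geometric_of_norm_lt_one hnorm
  have h2 : HasSum (fun n : ℕ => (-x)^n) (1 - -x)⁻¹ := hasSum_geometric_of_norm_lt_one hnorm
  have h3 := (h1.add h2).mul_left (z^2 * x)
  convert h3 using 1
  · rfl
  · funext n
    have hxp : Real.exp (-(((n:ℝ)+1) * z)) = x * x ^ n := by
      rw [hx, ← Real.exp_nat_mul, ← Real.exp_add]
      ring_nf
    rw [hxp, neg_pow]
    ring
  · unfold lgW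
    rw [← hx]
    have hd : (1:ℝ) + x ≠ 0 := by positivity
    rw [sub_neg_eq_add]
    field_simp
    ring

lemma lgF_two_zero : (∫ z : ℝ, z^2 * Real.exp ((0:ℝ) * z) * lgW z) = π^2/3 := by
  have h1 : (∫ z : ℝ, z^2 * Real.exp ((0:ℝ) * z) * lgW z) = ∫ z : ℝ, |z|^2 * lgW |z| := by
    congr 1; funext z; rw [zero_mul, Real.exp_zero, lgW_abs, sq_abs]; ring
  rw [h1, integral_comp_abs (f := fun u => u^2 * lgW u)]
  set F : ℕ → ℝ → ℝ :=
    fun n z => ((-1:ℝ)^n * ((n:ℝ)+1)) * (z^2 * Real.exp (-(((n:ℝ)+1) * z))) with hF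
  have hc : ∀ n : ℕ, (0:ℝ) < (n:ℝ) + 1 := fun n => by positivity
  have hFint : ∀ n : ℕ, Integrable (F n) (volume.restrict (Ioi 0)) :=
    fun n => (lg_term_integrableOn (hc n)).const_mul _
  have hFnormint : ∀ n : ℕ, (∫ z in Ioi (0:ℝ), ‖F n z‖) = 2 / ((n:ℝ)+1)^2 := by
    intro n
    have habs : ∀ z : ℝ, ‖F n z‖ = ((n:ℝ)+1) * (z^2 * Real.exp (-(((n:ℝ)+1) * z))) := by
      intro z
      simp only [hF, norm_mul, Real.norm_eq_abs, abs_pow, abs_neg, abs_one, one_pow, one_mul,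
        abs_of_pos (hc n), abs_of_nonneg (sq_nonneg z), abs_of_pos (Real.exp_pos _), abs_sq]
    simp_rw [habs]
    rw [MeasureTheory.integral_const_mul, lg_term_integral (hc n)]
    field_simp
  have hsummable : Summable (fun n : ℕ => ∫ z in Ioi (0:ℝ), ‖F n z‖) := by
    rw [show (fun n : ℕ => ∫ z in Ioi (0:ℝ), ‖F n z‖) = fun n : ℕ => 2 / ((n:ℝ)+1)^2 from
      funext hFnormint]
    have h := (lg_eta2.summable).abs
    refine (h.mul_left 2).congr fun n => ?_
    rw [abs_div, abs_pow, abs_neg, abs_one, one_pow, abs_pow,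
      abs_of_pos (hc n)]
    ring
  have hinterchange := integral_tsum_of_summable_integral_norm hFint hsummable
  have hptwise : ∫ z in Ioi (0:ℝ), z^2 * lgW z = ∫ z in Ioi (0:ℝ), ∑' n : ℕ, F n z := by
    apply setIntegral_congr_fun measurableSet_Ioi
    intro z hz
    rw [mem_Ioi] at hz
    exact ((lg_hasSum hz).tsum_eq).symm
  rw [hptwise, ← hinterchange]
  have hterm : ∀ n : ℕ, (∫ z in Ioi (0:ℝ), F n z) = 2 * ((-1:ℝ)^n / ((n:ℝ)+1)^2) := by
    intro n
    simp only [hF]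
    rw [MeasureTheory.integral_const_mul, lg_term_integral (hc n)]
    have := (hc n).ne'
    field_simp
  rw [show (fun n : ℕ => ∫ z in Ioi (0:ℝ), F n z) = fun n : ℕ => 2 * ((-1:ℝ)^n / ((n:ℝ)+1)^2)
    from funext hterm]
  rw [(lg_eta2.mul_left 2).tsum_eq]
  ring

noncomputable def lgF (k : ℕ) (s : ℝ) : ℝ := ∫ z : ℝ, z ^ k * Real.exp (s * z) * lgW z

lemma lg_hasDerivAt {t : ℝ} (ht : |t| < 1) (k : ℕ) :
    HasDerivAt (lgF k) (lgF (k + 1) t) t := lg_hasDerivAt' ht k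

noncomputable def lgG (s : ℝ) : ℝ := π * s / Real.sin (π * s)
noncomputable def lgG1 (s : ℝ) : ℝ :=
  (π * Real.sin (π * s) - π * s * (π * Real.cos (π * s))) / Real.sin (π * s) ^ 2
noncomputable def lgG2 (s : ℝ) : ℝ :=
  ((π^3 * s * Real.sin (π * s)) * Real.sin (π * s) ^ 2
    - (π * Real.sin (π * s) - π * s * (π * Real.cos (π * s)))
      * (2 * Real.sin (π * s) * (Real.cos (π * s) * π))) / (Real.sin (π * s) ^ 2) ^ 2

lemma lgF_zero_eq {t : ℝ} (h1 : -1 < t) (h2 : t < 1) (ht : t ≠ 0) : lgF 0 t = lgG t := by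
  unfold lgF lgG
  rw [← lgF_zero_eq' h1 h2 ht]
  congr 1
  funext z
  rw [pow_zero, one_mul]

lemma lg_sin_ne {s : ℝ} (h0 : s ≠ 0) (h1 : |s| < 1) : Real.sin (π * s) ≠ 0 := by
  rcases h0.lt_or_gt with h | h
  · have : Real.sin (π * (-s)) > 0 := by
      apply Real.sin_pos_of_pos_of_lt_pi
      · nlinarith [Real.pi_pos]
      · rw [abs_of_neg h] at h1
        nlinarith [Real.pi_pos]
    rw [mul_neg, Real.sin_neg] at this
    linarith
  · have : Real.sin (π * s) > 0 := by
      apply Real.sin_pos_of_pos_of_lt_pi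
      · nlinarith [Real.pi_pos]
      · rw [abs_of_pos h] at h1
        nlinarith [Real.pi_pos]
    linarith

lemma lg_sin_hasDeriv (s : ℝ) :
    HasDerivAt (fun s : ℝ => Real.sin (π * s)) (Real.cos (π * s) * π) s := by
  have := ((hasDerivAt_id s).const_mul π).sin
  refine this.congr_deriv ?_
  simp only [id_eq]
  ring

lemma lg_cos_hasDeriv (s : ℝ) :
    HasDerivAt (fun s : ℝ => Real.cos (π * s)) (-Real.sin (π * s) * π) s := by
  have := ((hasDerivAt_id s).const_mul π).cos
  refine this.congr_deriv ?_
  simp only [id_eq]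
  ring

lemma lgG_hasDeriv {s : ℝ} (hs : Real.sin (π * s) ≠ 0) : HasDerivAt lgG (lgG1 s) s := by
  have hnum : HasDerivAt (fun s : ℝ => π * s) π s := by
    simpa using (hasDerivAt_id s).const_mul π
  have := hnum.div (lg_sin_hasDeriv s) hs
  refine this.congr_deriv ?_
  unfold lgG1
  ring

lemma lgG1_hasDeriv {s : ℝ} (hs : Real.sin (π * s) ≠ 0) : HasDerivAt lgG1 (lgG2 s) s := by
  have hnum : HasDerivAt
      (fun s : ℝ => π * Real.sin (π * s) - π * s * (π * Real.cos (π * s)))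
      (π^3 * s * Real.sin (π * s)) s := by
    have hA := (lg_sin_hasDeriv s).const_mul π
    have hB1 : HasDerivAt (fun s : ℝ => π * s) π s := by
      simpa using (hasDerivAt_id s).const_mul π
    have hB := hB1.mul ((lg_cos_hasDeriv s).const_mul π)
    have := hA.sub hB
    refine this.congr_deriv ?_
    ring
  have hden : HasDerivAt (fun s : ℝ => Real.sin (π * s) ^ 2)
      (2 * Real.sin (π * s) * (Real.cos (π * s) * π)) s := by
    have := (lg_sin_hasDeriv s).pow 2
    refine this.congr_deriv ?_
    ring
  have := hnum.div hden (pow_ne_zero 2 hs)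
  exact this

lemma lgG2_eq {t : ℝ} (hs : Real.sin (π * t) ≠ 0) :
    lgG2 t = (1 / 2) * π ^ 2 * (1 / Real.sin (π * t)) ^ 3 *
      (π * t * (3 + Real.cos (2 * π * t)) - 2 * Real.sin (2 * π * t)) := by
  unfold lgG2
  rw [show 2 * π * t = 2 * (π * t) by ring, Real.cos_two_mul, Real.sin_two_mul]
  have h := Real.sin_sq_add_cos_sq (π * t)
  field_simp
  linear_combination (2 * π * t) * h

theorem logistic_second_moment_mgf (t : ℝ) (h1 : -1 < t) (h2 : t < 1) :
    ∫ z : ℝ, z ^ 2 * Real.exp (t * z) * (Real.exp (-z) / (1 + Real.exp (-z)) ^ 2)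
      = if t = 0 then π ^ 2 / 3
        else (1 / 2) * π ^ 2 * (1 / Real.sin (π * t)) ^ 3 *
          (π * t * (3 + Real.cos (2 * π * t)) - 2 * Real.sin (2 * π * t)) := by
  have habs : |t| < 1 := abs_lt.mpr ⟨h1, h2⟩
  have hLHS : (∫ z : ℝ, z ^ 2 * Real.exp (t * z) * (Real.exp (-z) / (1 + Real.exp (-z)) ^ 2))
      = lgF 2 t := rfl
  rw [hLHS]
  rcases eq_or_ne t 0 with rfl | ht0
  · rw [if_pos rfl]
    exact lgF_two_zero
  · rw [if_neg ht0]
    set r := min |t| (1 - |t|) with hr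
    have hr0 : 0 < r := by
      apply lt_min (abs_pos.mpr ht0)
      linarith
    have hU : ∀ s : ℝ, s ∈ Metric.ball t (r / 2) → s ≠ 0 ∧ |s| < 1 := by
      intro s hsU
      rw [Metric.mem_ball, Real.dist_eq] at hsU
      have h3 : r ≤ |t| := min_le_left _ _
      have h4 : r ≤ 1 - |t| := min_le_right _ _
      have h5 := abs_sub_abs_le_abs_sub s t
      have h6 := abs_sub_abs_le_abs_sub t s
      rw [abs_sub_comm] at h6
      constructor
      · intro hs0
        subst hs0
        rw [zero_sub, abs_neg] at hsU
        have hpos := abs_pos.mpr ht0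
        linarith
      · linarith
    have hF1G1 : ∀ s : ℝ, s ∈ Metric.ball t (r / 2) → lgF 1 s = lgG1 s := by
      intro s hsU
      obtain ⟨hs0, hs1⟩ := hU s hsU
      have hsin := lg_sin_ne hs0 hs1
      have hEq : lgG =ᶠ[nhds s] lgF 0 := by
        filter_upwards [(Metric.isOpen_ball).mem_nhds hsU] with y hy
        obtain ⟨hy0, hy1⟩ := hU y hy
        rw [abs_lt] at hy1
        exact (lgF_zero_eq hy1.1 hy1.2 hy0).symm
      have hd : HasDerivAt lgG (lgF 1 s) s :=
        (lg_hasDerivAt hs1 0).congr_of_eventuallyEq hEq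
      exact hd.unique (lgG_hasDeriv hsin)
    have hEq1 : lgG1 =ᶠ[nhds t] lgF 1 := by
      filter_upwards [(Metric.isOpen_ball).mem_nhds (Metric.mem_ball_self (show (0:ℝ) < r/2 by linarith))]
        with y hy
      exact (hF1G1 y hy).symm
    have hd2 : HasDerivAt lgG1 (lgF 2 t) t :=
      (lg_hasDerivAt habs 1).congr_of_eventuallyEq hEq1
    have := hd2.unique (lgG1_hasDeriv (lg_sin_ne ht0 habs))
    rw [this, lgG2_eq (lg_sin_ne ht0 habs)]
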